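/- (Tail bound for the inner product of two independent Gaussian vectors.) Let z₁, z₂ ∼ N(0, σ²·I_N) be independent Gaussian vectors in ℝ^N. Then for every t > 0, P(|z₁·z₂| ≥ σ²·t) ≤ 2·exp(−N/8) + 2·exp(−t²/(4·N)). -/

import Mathlib

open MeasureTheory ProbabilityTheory Real
open scoped ENNReal NNReal

lemma pdf_mul_exp_lin (v : ℝ≥0) (hv : v ≠ 0) (c y : ℝ) :
    rexp (c * y) * gaussianPDFReal 0 v y
      = rexp ((v : ℝ) * c ^ 2 / 2) * gaussianPDFReal ((v : ℝ) * c) v y := by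
  have hv' : (0:ℝ) < v := by positivity
  simp only [gaussianPDFReal, sub_zero]
  rw [mul_left_comm, mul_left_comm (rexp ((v:ℝ)*c^2/2))]
  congr 1
  rw [← Real.exp_add, ← Real.exp_add]
  congr 1
  field_simp
  ring

lemma lint_exp_lin (v : ℝ≥0) (hv : v ≠ 0) (c : ℝ) :
    ∫⁻ y, ENNReal.ofReal (rexp (c * y)) ∂(gaussianReal 0 v)
      = ENNReal.ofReal (rexp ((v : ℝ) * c ^ 2 / 2)) := by
  rw [gaussianReal_of_var_ne_zero 0 hv,
    lintegral_withDensity_eq_lintegral_mul volume (measurable_gaussianPDF 0 v)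
      (by fun_prop : Measurable fun y => ENNReal.ofReal (rexp (c * y)))]
  have : ∀ y, (gaussianPDF 0 v * fun y => ENNReal.ofReal (rexp (c * y))) y
      = ENNReal.ofReal (rexp ((v : ℝ) * c ^ 2 / 2)) * ENNReal.ofReal (gaussianPDFReal ((v:ℝ)*c) v y) := by
    intro y
    simp only [Pi.mul_apply, gaussianPDF]
    rw [← ENNReal.ofReal_mul (gaussianPDFReal_nonneg 0 v y), mul_comm (gaussianPDFReal 0 v y),
      pdf_mul_exp_lin v hv c y, ENNReal.ofReal_mul (Real.exp_nonneg _)]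
  simp_rw [this]
  rw [lintegral_const_mul _ ((measurable_gaussianPDFReal _ _).ennreal_ofReal),
    lintegral_gaussianPDFReal_eq_one _ hv, mul_one]

lemma pdf_mul_exp_sq (v : ℝ≥0) (hv : v ≠ 0) (a : ℝ) (ha : 2 * a * (v:ℝ) < 1) (x : ℝ) :
    rexp (a * x ^ 2) * gaussianPDFReal 0 v x
      = (Real.sqrt (1 - 2 * a * (v:ℝ)))⁻¹
        * gaussianPDFReal 0 ⟨(v:ℝ) / (1 - 2 * a * (v:ℝ)), by
          have hv' : (0:ℝ) < v := by positivity
          have h1 : (0:ℝ) < 1 - 2 * a * (v:ℝ) := by linarith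
          positivity⟩ x := by
  have hv' : (0:ℝ) < v := by positivity
  have h1 : (0:ℝ) < 1 - 2 * a * (v:ℝ) := by linarith
  simp only [gaussianPDFReal, sub_zero, NNReal.coe_mk]
  rw [mul_left_comm, ← Real.exp_add]
  change (√(2 * π * (v:ℝ)))⁻¹ * rexp (a * x ^ 2 + -x ^ 2 / (2 * (v:ℝ))) = (√(1 - 2*a*(v:ℝ)))⁻¹ * ((√(2 * π * ((v:ℝ)/(1-2*a*(v:ℝ)))))⁻¹ * rexp (-x^2 / (2 * ((v:ℝ)/(1-2*a*(v:ℝ))))))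
  rw [show (√(1 - 2*a*(v:ℝ)))⁻¹ * ((√(2 * π * ((v:ℝ)/(1-2*a*(v:ℝ)))))⁻¹ * rexp (-x^2 / (2 * ((v:ℝ)/(1-2*a*(v:ℝ))))))
      = (√(1 - 2*a*(v:ℝ)) * √(2 * π * ((v:ℝ)/(1-2*a*(v:ℝ)))))⁻¹ * rexp (-x^2 / (2 * ((v:ℝ)/(1-2*a*(v:ℝ))))) by
    rw [mul_inv]; ring]
  rw [← Real.sqrt_mul h1.le]
  congr 2
  · field_simp
    rw [mul_div_cancel_right₀ _ (show (1:ℝ) - 2 * (v:ℝ) * a ≠ 0 by intro h; linarith)]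
  · field_simp
    ring

lemma lint_exp_sq (v : ℝ≥0) (hv : v ≠ 0) (a : ℝ) (ha : 2 * a * (v:ℝ) < 1) :
    ∫⁻ x, ENNReal.ofReal (rexp (a * x ^ 2)) ∂(gaussianReal 0 v)
      = ENNReal.ofReal ((Real.sqrt (1 - 2 * a * (v:ℝ)))⁻¹) := by
  have hv' : (0:ℝ) < v := by positivity
  have h1 : (0:ℝ) < 1 - 2 * a * (v:ℝ) := by linarith
  set v' : ℝ≥0 := ⟨(v:ℝ) / (1 - 2 * a * (v:ℝ)), by positivity⟩ with hv'_def
  have hv'0 : v' ≠ 0 := by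
    intro h
    have : (v' : ℝ) = 0 := by rw [h]; simp
    rw [hv'_def] at this
    change (v:ℝ) / (1 - 2 * a * (v:ℝ)) = 0 at this
    have := div_pos hv' h1
    linarith
  rw [gaussianReal_of_var_ne_zero 0 hv,
    lintegral_withDensity_eq_lintegral_mul volume (measurable_gaussianPDF 0 v)
      (by fun_prop : Measurable fun x => ENNReal.ofReal (rexp (a * x ^ 2)))]
  have hpt : ∀ x, (gaussianPDF 0 v * fun x => ENNReal.ofReal (rexp (a * x ^ 2))) x
      = ENNReal.ofReal ((Real.sqrt (1 - 2 * a * (v:ℝ)))⁻¹)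
        * ENNReal.ofReal (gaussianPDFReal 0 v' x) := by
    intro x
    simp only [Pi.mul_apply, gaussianPDF]
    rw [← ENNReal.ofReal_mul (gaussianPDFReal_nonneg 0 v x), mul_comm (gaussianPDFReal 0 v x),
      pdf_mul_exp_sq v hv a ha x, ENNReal.ofReal_mul (by positivity)]
  simp_rw [hpt]
  rw [lintegral_const_mul _ ((measurable_gaussianPDFReal _ _).ennreal_ofReal),
    lintegral_gaussianPDFReal_eq_one _ hv'0, mul_one]

lemma lintegral_pi_prod {n : ℕ} (μ : Measure ℝ) [SigmaFinite μ] (f : Fin n → ℝ → ℝ≥0∞)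
    (hf : ∀ i, Measurable (f i)) :
    ∫⁻ x, ∏ i, f i (x i) ∂(Measure.pi fun _ : Fin n => μ) = ∏ i, ∫⁻ x, f i x ∂μ := by
  induction n with
  | zero => simp
  | succ n ih =>
    have hmp := (measurePreserving_piFinSuccAbove (fun _ : Fin (n+1) => μ) 0).symm
    rw [← hmp.lintegral_comp (by
      exact Finset.measurable_prod _ fun i _ => (hf i).comp (measurable_pi_apply i))]
    have heq : ∀ (p : ℝ × (Fin n → ℝ)),
        (∏ i, f i (((MeasurableEquiv.piFinSuccAbove (fun _ : Fin (n+1) => ℝ) 0).symm p) i))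
          = f 0 p.1 * ∏ i : Fin n, f i.succ (p.2 i) := by
      intro p
      rw [Fin.prod_univ_succ]
      simp [MeasurableEquiv.piFinSuccAbove_symm_apply, Fin.insertNthEquiv,
        Fin.insertNth_zero, Fin.zero_succAbove]
    simp only [Function.comp_def, heq]
    rw [lintegral_prod_mul (f := f 0) (g := fun y : Fin n → ℝ => ∏ i : Fin n, f i.succ (y i))
      (hf 0).aemeasurable
      (Finset.measurable_prod _ fun i _ => (hf i.succ).comp (measurable_pi_apply i)).aemeasurable,
      ih _ fun i => hf i.succ, Fin.prod_univ_succ]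

lemma mgf_inner (N : ℕ) (v : ℝ≥0) (hv : v ≠ 0) (s : ℝ) (hs : (s * (v:ℝ)) ^ 2 < 1) :
    ∫⁻ p, ENNReal.ofReal (rexp (s * ∑ i, p.1 i * p.2 i))
        ∂((Measure.pi fun _ : Fin N => gaussianReal 0 v).prod
          (Measure.pi fun _ : Fin N => gaussianReal 0 v))
      = ENNReal.ofReal (((Real.sqrt (1 - (s * (v:ℝ)) ^ 2))⁻¹) ^ N) := by
  have hmeas : Measurable fun p : (Fin N → ℝ) × (Fin N → ℝ) =>
      ENNReal.ofReal (rexp (s * ∑ i, p.1 i * p.2 i)) := by fun_prop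
  rw [lintegral_prod _ hmeas.aemeasurable]
  set a : ℝ := (v:ℝ) * s ^ 2 / 2 with ha_def
  have hinner : ∀ x : Fin N → ℝ,
      ∫⁻ y, ENNReal.ofReal (rexp (s * ∑ i, x i * y i)) ∂(Measure.pi fun _ : Fin N => gaussianReal 0 v)
        = ENNReal.ofReal (rexp (∑ i, a * (x i) ^ 2)) := by
    intro x
    have h1 : ∀ y : Fin N → ℝ, ENNReal.ofReal (rexp (s * ∑ i, x i * y i))
        = ∏ i, ENNReal.ofReal (rexp ((s * x i) * y i)) := by
      intro y
      rw [← ENNReal.ofReal_prod_of_nonneg fun i _ => (Real.exp_pos _).le, ← Real.exp_sum]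
      congr 1
      rw [Finset.mul_sum]
      ring_nf
    simp_rw [h1]
    rw [lintegral_pi_prod (f := fun i y => ENNReal.ofReal (rexp (s * x i * y))) _
      fun i => by fun_prop]
    simp_rw [fun i => lint_exp_lin v hv (s * x i)]
    rw [← ENNReal.ofReal_prod_of_nonneg fun i _ => (Real.exp_pos _).le, ← Real.exp_sum]
    refine congrArg (fun r : ℝ => ENNReal.ofReal (rexp r)) (Finset.sum_congr rfl fun i _ => ?_)
    rw [ha_def]
    ring
  simp_rw [hinner]
  have h2 : ∀ x : Fin N → ℝ, ENNReal.ofReal (rexp (∑ i, a * (x i) ^ 2))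
      = ∏ i, ENNReal.ofReal (rexp (a * (x i) ^ 2)) := by
    intro x
    rw [← ENNReal.ofReal_prod_of_nonneg fun i _ => (Real.exp_pos _).le, ← Real.exp_sum]
  simp_rw [h2]
  have hav : 2 * a * (v:ℝ) < 1 := by
    rw [ha_def]
    calc 2 * ((v:ℝ) * s ^ 2 / 2) * (v:ℝ) = (s * (v:ℝ)) ^ 2 := by ring
    _ < 1 := hs
  rw [lintegral_pi_prod (f := fun _ z => ENNReal.ofReal (rexp (a * z ^ 2))) _
    fun i => by fun_prop]
  simp_rw [lint_exp_sq v hv a hav]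
  rw [Finset.prod_const, ← ENNReal.ofReal_pow (by positivity), Finset.card_univ, Fintype.card_fin]
  congr 3
  rw [ha_def]; ring

lemma chernoff_lintegral {α : Type*} [MeasurableSpace α] (μ : Measure α) (f : α → ℝ)
    (hf : Measurable f) (ε s : ℝ) (hs : 0 ≤ s) :
    μ {p | ε ≤ f p} ≤ ENNReal.ofReal (rexp (-(s * ε)))
      * ∫⁻ p, ENNReal.ofReal (rexp (s * f p)) ∂μ := by
  have key : ENNReal.ofReal (rexp (s * ε)) * μ {p | ε ≤ f p}
      ≤ ∫⁻ p, ENNReal.ofReal (rexp (s * f p)) ∂μ := by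
    rw [← setLIntegral_const {p | ε ≤ f p} _]
    calc ∫⁻ _ in {p | ε ≤ f p}, ENNReal.ofReal (rexp (s * ε)) ∂μ
        ≤ ∫⁻ p in {p | ε ≤ f p}, ENNReal.ofReal (rexp (s * f p)) ∂μ := by
          refine setLIntegral_mono (by fun_prop) fun p hp => ?_
          exact ENNReal.ofReal_le_ofReal (Real.exp_le_exp.2 (mul_le_mul_of_nonneg_left hp hs))
      _ ≤ ∫⁻ p, ENNReal.ofReal (rexp (s * f p)) ∂μ := setLIntegral_le_lintegral _ _
  have h2 := mul_le_mul_right key (ENNReal.ofReal (rexp (-(s * ε))))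
  rwa [← mul_assoc, ← ENNReal.ofReal_mul (Real.exp_nonneg _), ← Real.exp_add, neg_add_cancel,
    Real.exp_zero, ENNReal.ofReal_one, one_mul] at h2

lemma sqrt_inv_le_exp (x : ℝ) (h0 : 0 ≤ x) (h : x ≤ 1/2) :
    (Real.sqrt (1 - x))⁻¹ ≤ rexp x := by
  have hkey : rexp (-(2*x)) ≤ 1 - x := by
    have h2 : 1 ≤ (1 - x) * rexp (2*x) := by nlinarith [Real.add_one_le_exp (2*x)]
    have h3 := mul_le_mul_of_nonneg_right h2 (Real.exp_pos (-(2*x))).le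
    rwa [one_mul, mul_assoc, ← Real.exp_add, add_neg_cancel, Real.exp_zero, mul_one] at h3
  have hx1 : (0:ℝ) < 1 - x := lt_of_lt_of_le (Real.exp_pos _) hkey
  have h4 : rexp (-x) ≤ Real.sqrt (1 - x) := by
    have h5 : Real.sqrt (rexp (-(2*x))) ≤ Real.sqrt (1 - x) := Real.sqrt_le_sqrt hkey
    rwa [show (-(2*x)) = (-x) + (-x) by ring, Real.exp_add, Real.sqrt_mul_self
      (Real.exp_pos _).le] at h5
  have h6 : (Real.sqrt (1 - x))⁻¹ ≤ (rexp (-x))⁻¹ :=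
    inv_anti₀ (Real.exp_pos _) h4
  rwa [← Real.exp_neg, neg_neg] at h6

/-- **Tail bound for the inner product of two independent Gaussian vectors.** Let
`z₁, z₂ ∼ N(0, σ²·I_N)` be independent (modelled by the product of the two i.i.d.-coordinate
Gaussian measures). Then for `t > 0`,
`P(|z₁·z₂| ≥ σ²·t) ≤ 2·exp(−N/8) + 2·exp(−t²/(4·N))`. -/
theorem gaussian_inner_product_pair_tail (N : ℕ) (σ2 : ℝ≥0) (hσ2 : 0 < σ2)
    (t : ℝ) (ht : 0 < t) :
    ((Measure.pi fun _ : Fin N => gaussianReal 0 σ2).prod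
        (Measure.pi fun _ : Fin N => gaussianReal 0 σ2))
        {p | (σ2 : ℝ) * t ≤ |∑ i, p.1 i * p.2 i|}
      ≤ ENNReal.ofReal (2 * Real.exp (-(N : ℝ) / 8) + 2 * Real.exp (-(t ^ 2) / (4 * N))) := by
  set M := (Measure.pi fun _ : Fin N => gaussianReal 0 σ2).prod
      (Measure.pi fun _ : Fin N => gaussianReal 0 σ2) with hM
  have hv : σ2 ≠ 0 := hσ2.ne'
  have hv' : (0:ℝ) < (σ2:ℝ) := hσ2
  by_cases hN : N = 0
  · subst hN
    have h1 : M {p | (σ2 : ℝ) * t ≤ |∑ i, p.1 i * p.2 i|} ≤ 1 := prob_le_one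
    refine h1.trans ?_
    rw [ENNReal.one_le_ofReal]
    norm_num
  -- now N ≥ 1
  have hN' : (0:ℝ) < N := by positivity
  -- choose u
  set Z : (Fin N → ℝ) × (Fin N → ℝ) → ℝ := fun p => ∑ i, p.1 i * p.2 i with hZ
  have hZm : Measurable Z := by
    apply Finset.measurable_sum
    intro i _
    exact ((measurable_pi_apply i).comp measurable_fst).mul
      ((measurable_pi_apply i).comp measurable_snd)
  obtain ⟨u, hu0, hu2, hubound⟩ : ∃ u : ℝ, 0 < u ∧ u ≤ 1/2 ∧
      2 * (rexp (-(u * t)) * ((Real.sqrt (1 - u^2))⁻¹) ^ N)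
        ≤ 2 * rexp (-(N : ℝ) / 8) + 2 * rexp (-(t ^ 2) / (4 * N)) := by
    by_cases htN : t ≤ N
    · refine ⟨t / (2 * N), by positivity, ?_, ?_⟩
      · rw [div_le_div_iff₀ (by positivity) (by norm_num)]
        linarith
      · set u := t / (2 * N) with hu_def
        have hu0 : 0 < u := by positivity
        have husq : u ^ 2 ≤ 1/2 := by
          have : u ≤ 1/2 := by
            rw [hu_def, div_le_div_iff₀ (by positivity) (by norm_num)]
            linarith
          nlinarith
        have hR : ((Real.sqrt (1 - u^2))⁻¹) ^ N ≤ rexp ((N:ℝ) * u^2) := by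
          calc ((Real.sqrt (1 - u^2))⁻¹) ^ N ≤ (rexp (u^2)) ^ N := by
                apply pow_le_pow_left₀ (by positivity)
                exact sqrt_inv_le_exp (u^2) (sq_nonneg u) husq
            _ = rexp ((N:ℝ) * u^2) := by rw [← Real.exp_nat_mul]
        have hmain : rexp (-(u * t)) * ((Real.sqrt (1 - u^2))⁻¹) ^ N
            ≤ rexp (-(t ^ 2) / (4 * N)) := by
          calc rexp (-(u * t)) * ((Real.sqrt (1 - u^2))⁻¹) ^ N
              ≤ rexp (-(u * t)) * rexp ((N:ℝ) * u^2) :=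
                mul_le_mul_of_nonneg_left hR (Real.exp_pos _).le
            _ = rexp (-(u * t) + (N:ℝ) * u^2) := by rw [← Real.exp_add]
            _ = rexp (-(t ^ 2) / (4 * N)) := by
                congr 1
                rw [hu_def]
                field_simp
                ring
        have h0 : (0:ℝ) ≤ rexp (-(N : ℝ) / 8) := (Real.exp_pos _).le
        linarith
    · push_neg at htN
      refine ⟨1/2, by norm_num, le_refl _, ?_⟩
      have hR : ((Real.sqrt (1 - (1/2:ℝ)^2))⁻¹) ^ N ≤ rexp ((N:ℝ) / 4) := by
        calc ((Real.sqrt (1 - (1/2:ℝ)^2))⁻¹) ^ N ≤ (rexp (1/4)) ^ N := by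
              apply pow_le_pow_left₀ (by positivity)
              have := sqrt_inv_le_exp (1/4) (by norm_num) (by norm_num)
              exact (show (√(1 - (1/2:ℝ)^2))⁻¹ = (√(1 - 1/4))⁻¹ by norm_num).trans_le this
          _ = rexp ((N:ℝ) / 4) := by rw [← Real.exp_nat_mul]; congr 1; ring
      have hmain : rexp (-((1/2:ℝ) * t)) * ((Real.sqrt (1 - (1/2:ℝ)^2))⁻¹) ^ N
          ≤ rexp (-(N : ℝ) / 8) := by
        calc rexp (-((1/2:ℝ) * t)) * ((Real.sqrt (1 - (1/2:ℝ)^2))⁻¹) ^ N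
            ≤ rexp (-((1/2:ℝ) * t)) * rexp ((N:ℝ) / 4) :=
              mul_le_mul_of_nonneg_left hR (Real.exp_pos _).le
          _ = rexp (-((1/2:ℝ) * t) + (N:ℝ) / 4) := by rw [← Real.exp_add]
          _ ≤ rexp (-(N : ℝ) / 8) := by
              apply Real.exp_le_exp.2
              linarith
      have h0 : (0:ℝ) ≤ rexp (-(t ^ 2) / (4 * N)) := (Real.exp_pos _).le
      linarith
  -- Chernoff with s = u / σ2
  set s : ℝ := u / (σ2:ℝ) with hs_def
  have hs0 : 0 ≤ s := by positivity
  have hsv : s * (σ2:ℝ) = u := div_mul_cancel₀ u hv'.ne'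
  have hsv2 : (s * (σ2:ℝ)) ^ 2 < 1 := by rw [hsv]; nlinarith
  have hmgf : ∫⁻ p, ENNReal.ofReal (rexp (s * Z p)) ∂M
      = ENNReal.ofReal (((Real.sqrt (1 - u ^ 2))⁻¹) ^ N) := by
    rw [hZ, hM]
    rw [mgf_inner N σ2 hv s hsv2, hsv]
  have hmgf' : ∫⁻ p, ENNReal.ofReal (rexp (s * (-Z p))) ∂M
      = ENNReal.ofReal (((Real.sqrt (1 - u ^ 2))⁻¹) ^ N) := by
    have : ∀ p, s * (-Z p) = (-s) * Z p := fun p => by ring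
    simp_rw [this]
    rw [hZ, hM, mgf_inner N σ2 hv (-s) (by rw [neg_mul, neg_sq]; exact hsv2), neg_mul, neg_sq, hsv]
  have hch1 : M {p | (σ2:ℝ) * t ≤ Z p}
      ≤ ENNReal.ofReal (rexp (-(u * t)) * ((Real.sqrt (1 - u ^ 2))⁻¹) ^ N) := by
    have := chernoff_lintegral M Z hZm ((σ2:ℝ) * t) s hs0
    rw [hmgf] at this
    refine this.trans_eq ?_
    rw [← ENNReal.ofReal_mul (Real.exp_nonneg _)]
    congr 2
    rw [show s * ((σ2:ℝ) * t) = (s * (σ2:ℝ)) * t by ring, hsv]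
  have hch2 : M {p | (σ2:ℝ) * t ≤ -Z p}
      ≤ ENNReal.ofReal (rexp (-(u * t)) * ((Real.sqrt (1 - u ^ 2))⁻¹) ^ N) := by
    have := chernoff_lintegral M (fun p => -Z p) hZm.neg ((σ2:ℝ) * t) s hs0
    rw [hmgf'] at this
    refine this.trans_eq ?_
    rw [← ENNReal.ofReal_mul (Real.exp_nonneg _)]
    congr 2
    rw [show s * ((σ2:ℝ) * t) = (s * (σ2:ℝ)) * t by ring, hsv]
  have hsub : {p : (Fin N → ℝ) × (Fin N → ℝ) | (σ2:ℝ) * t ≤ |∑ i, p.1 i * p.2 i|}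
      ⊆ {p | (σ2:ℝ) * t ≤ Z p} ∪ {p | (σ2:ℝ) * t ≤ -Z p} := by
    intro p hp
    simp only [Set.mem_setOf_eq] at hp
    rcases le_abs.mp hp with h | h
    · exact Or.inl h
    · exact Or.inr h
  calc M {p | (σ2:ℝ) * t ≤ |∑ i, p.1 i * p.2 i|}
      ≤ M ({p | (σ2:ℝ) * t ≤ Z p} ∪ {p | (σ2:ℝ) * t ≤ -Z p}) := measure_mono hsub
    _ ≤ M {p | (σ2:ℝ) * t ≤ Z p} + M {p | (σ2:ℝ) * t ≤ -Z p} := measure_union_le _ _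
    _ ≤ ENNReal.ofReal (rexp (-(u * t)) * ((Real.sqrt (1 - u ^ 2))⁻¹) ^ N)
        + ENNReal.ofReal (rexp (-(u * t)) * ((Real.sqrt (1 - u ^ 2))⁻¹) ^ N) :=
          add_le_add hch1 hch2
    _ = ENNReal.ofReal (2 * (rexp (-(u * t)) * ((Real.sqrt (1 - u ^ 2))⁻¹) ^ N)) := by
        rw [two_mul, ENNReal.ofReal_add (by positivity) (by positivity)]
    _ ≤ ENNReal.ofReal (2 * rexp (-(N : ℝ) / 8) + 2 * rexp (-(t ^ 2) / (4 * N))) :=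
        ENNReal.ofReal_le_ofReal hubound
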